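/- Let (A,B) ∈ MC₂ be a pair of multiplicative complements such that the series ∑_{b ∈ B} 1/b converges. Then A(x) is not o(x), i.e., limsup_{x→∞} A(x)/x > 0. -/
import Mathlib


open Filter

/-- Counting function: number of elements of `A` that are at most `x`. -/
noncomputable def cnt (A : Set ℕ) (x : ℕ) : ℕ := {a ∈ A | a ≤ x}.ncard

/-- `(A, B)` are multiplicative complements of order 2: both are sets of positive
integers and every positive integer is a product `a * b` with `a ∈ A`, `b ∈ B`. -/
def MC2 (A B : Set ℕ) : Prop :=
  A ⊆ {n | 0 < n} ∧ B ⊆ {n | 0 < n} ∧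
    ∀ n : ℕ, 0 < n → ∃ a ∈ A, ∃ b ∈ B, n = a * b

open Classical in
lemma cnt_eq (A : Set ℕ) (hA : A ⊆ {n | 0 < n}) (x : ℕ) :
    cnt A x = ((Finset.Icc 1 x).filter (· ∈ A)).card := by
  rw [cnt]
  have h : {a ∈ A | a ≤ x} = (((Finset.Icc 1 x).filter (· ∈ A) : Finset ℕ) : Set ℕ) := by
    ext a
    simp only [Set.mem_setOf_eq, Finset.coe_filter, Finset.mem_Icc]
    constructor
    · rintro ⟨ha, hax⟩; exact ⟨⟨hA ha, hax⟩, ha⟩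
    · rintro ⟨⟨_, hax⟩, ha⟩; exact ⟨ha, hax⟩
  rw [h, Set.ncard_coe_finset]

lemma cnt_le_self {A : Set ℕ} (hA : A ⊆ {n | 0 < n}) (x : ℕ) : cnt A x ≤ x := by
  classical
  rw [cnt_eq A hA]
  calc _ ≤ (Finset.Icc 1 x).card := Finset.card_filter_le _ _
    _ = x := by simp

open Classical in
lemma count_ineq (A B : Set ℕ) (hAB : MC2 A B) (x : ℕ) :
    x ≤ ∑ b ∈ (Finset.Icc 1 x).filter (· ∈ B), cnt A (x / b) := by
  obtain ⟨hA, hB, hmc⟩ := hAB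
  have hsub : Finset.Icc 1 x ⊆ ((Finset.Icc 1 x).filter (· ∈ B)).biUnion
      (fun b => ((Finset.Icc 1 (x / b)).filter (· ∈ A)).image (· * b)) := by
    intro n hn
    rw [Finset.mem_Icc] at hn
    obtain ⟨a, ha, b, hb, rfl⟩ := hmc n (hn.1)
    have hapos : 0 < a := hA ha
    have hbpos : 0 < b := hB hb
    have hbx : b ≤ x := le_trans (Nat.le_mul_of_pos_left b hapos) hn.2
    rw [Finset.mem_biUnion]
    refine ⟨b, ?_, ?_⟩
    · rw [Finset.mem_filter, Finset.mem_Icc]; exact ⟨⟨hbpos, hbx⟩, hb⟩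
    · rw [Finset.mem_image]
      refine ⟨a, ?_, rfl⟩
      rw [Finset.mem_filter, Finset.mem_Icc]
      exact ⟨⟨hapos, (Nat.le_div_iff_mul_le hbpos).2 hn.2⟩, ha⟩
  calc x = (Finset.Icc 1 x).card := by simp
    _ ≤ _ := Finset.card_le_card hsub
    _ ≤ ∑ b ∈ (Finset.Icc 1 x).filter (· ∈ B),
        (((Finset.Icc 1 (x / b)).filter (· ∈ A)).image (· * b)).card :=
      Finset.card_biUnion_le
    _ ≤ ∑ b ∈ (Finset.Icc 1 x).filter (· ∈ B), cnt A (x / b) := by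
      refine Finset.sum_le_sum fun b _ => ?_
      rw [cnt_eq A hA]
      exact Finset.card_image_le

open Classical in
lemma tail_bound (A B : Set ℕ) (F : Finset B) (s : Finset ℕ)
    (hsum : Summable (fun b : B => (1 : ℝ) / ((b : ℕ) : ℝ)))
    (hsB : ∀ n ∈ s, n ∈ B)
    (hsF : ∀ n ∈ s, ∀ h : n ∈ B, (⟨n, h⟩ : B) ∉ F) :
    ∑ n ∈ s, (1 : ℝ) / (n : ℝ) ≤ ∑' (i : {x : B // x ∉ F}), (1 : ℝ) / ((i : ℕ) : ℝ) := by
  set f : {x : B // x ∉ F} → ℝ := fun i => (1 : ℝ) / (((i : B) : ℕ) : ℝ) with hf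
  have hsumf : Summable f := (hsum.subtype {x : B | x ∉ F})
  set t : Finset {x : B // x ∉ F} :=
    s.attach.image (fun n => ⟨⟨n.1, hsB n.1 n.2⟩, hsF n.1 n.2 _⟩) with ht
  have hinj : Set.InjOn (fun n : {n // n ∈ s} => (⟨⟨n.1, hsB n.1 n.2⟩, hsF n.1 n.2 _⟩ : {x : B // x ∉ F})) s.attach := by
    intro a _ b _ hab
    simp only [Subtype.mk.injEq] at hab
    exact Subtype.ext hab
  have hsun : ∑ i ∈ t, f i = ∑ n ∈ s, (1 : ℝ) / (n : ℝ) := by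
    rw [ht, Finset.sum_image hinj]
    rw [← Finset.sum_attach s (fun n => (1 : ℝ) / (n : ℝ))]
  rw [← hsun]
  exact Summable.sum_le_tsum t (fun i _ => by positivity) hsumf
open Classical in
lemma not_tendsto (A B : Set ℕ) (hAB : MC2 A B)
    (hsum : Summable (fun b : B => (1 : ℝ) / ((b : ℕ) : ℝ))) :
    ¬ Tendsto (fun x : ℕ => (cnt A x : ℝ) / (x : ℝ)) atTop (nhds 0) := by
  intro htend
  obtain ⟨hA, hB, _⟩ := hAB
  -- choose finite F ⊆ B with small tail
  have htail := tendsto_tsum_compl_atTop_zero (fun b : B => (1:ℝ)/((b:ℕ):ℝ))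
  have h4 : (0 : ℝ) < 1/4 := by norm_num
  obtain ⟨F, hF⟩ : ∃ F : Finset B,
      ∑' (i : {x : B // x ∉ F}), (1 : ℝ) / ((i : ℕ) : ℝ) < 1/4 :=
    (htail.eventually (eventually_lt_nhds h4)).exists
  set C : ℝ := ∑ b ∈ F, (1 : ℝ) / ((b : ℕ) : ℝ) with hC
  have hC0 : 0 ≤ C := Finset.sum_nonneg fun b _ => by positivity
  set ε : ℝ := 1 / (4 * (C + 1)) with hε
  have hε0 : 0 < ε := by positivity
  have hεC : ε * C ≤ 1/4 := by
    rw [hε]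
    rw [div_mul_eq_mul_div, one_mul, div_le_div_iff₀ (by positivity) (by norm_num)]
    nlinarith
  -- from tendsto, get N with global bound
  obtain ⟨N0, hN0⟩ := (htend.eventually (eventually_lt_nhds hε0)).exists_forall_of_atTop
  set N : ℕ := max N0 1 with hN
  have hglob : ∀ y : ℕ, (cnt A y : ℝ) ≤ ε * y + N := by
    intro y
    by_cases hy : N ≤ y
    · have h1 := hN0 y (le_trans (le_max_left _ _) hy)
      have hy0 : (0 : ℝ) < y := by
        have : 1 ≤ y := le_trans (le_max_right _ _) hy
        exact_mod_cast this
      rw [div_lt_iff₀ hy0] at h1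
      have : (0:ℝ) ≤ N := by positivity
      nlinarith
    · push_neg at hy
      have h1 : (cnt A y : ℝ) ≤ y := by exact_mod_cast cnt_le_self hA y
      have h2 : (y : ℝ) ≤ N := by exact_mod_cast hy.le
      nlinarith [mul_nonneg hε0.le (Nat.cast_nonneg y : (0:ℝ) ≤ y)]
  -- now derive contradiction with x = 2 * F.card * N + 1
  set K : ℕ := F.card * N with hK
  set x : ℕ := 2 * K + 1 with hx
  set Bx : Finset ℕ := (Finset.Icc 1 x).filter (· ∈ B) with hBx
  have hBxB : ∀ b ∈ Bx, b ∈ B := fun b hb => (Finset.mem_filter.1 hb).2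
  have hBxpos : ∀ b ∈ Bx, (1:ℝ) ≤ (b:ℝ) := by
    intro b hb
    have := (Finset.mem_Icc.1 (Finset.mem_filter.1 hb).1).1
    exact_mod_cast this
  have hmain : (x : ℝ) ≤ ∑ b ∈ Bx, (cnt A (x / b) : ℝ) := by
    exact_mod_cast count_ineq A B ⟨hA, hB, ‹_›⟩ x
  set F' : Finset ℕ := F.image Subtype.val with hF'
  set P : Finset ℕ := Bx.filter (· ∈ F') with hP
  set Q : Finset ℕ := Bx.filter (· ∉ F') with hPQ
  have hsplit : ∑ b ∈ Bx, (cnt A (x / b) : ℝ)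
      = ∑ b ∈ P, (cnt A (x / b) : ℝ) + ∑ b ∈ Q, (cnt A (x / b) : ℝ) :=
    (Finset.sum_filter_add_sum_filter_not Bx (· ∈ F') _).symm
  -- bound on Q
  have hQbound : ∑ b ∈ Q, (cnt A (x / b) : ℝ) ≤ (x : ℝ) * (1/4) := by
    have h1 : ∑ b ∈ Q, (cnt A (x / b) : ℝ) ≤ ∑ b ∈ Q, (x : ℝ) * (1 / (b:ℝ)) := by
      refine Finset.sum_le_sum fun b hb => ?_
      have hb' : b ∈ Bx := (Finset.mem_filter.1 hb).1
      calc (cnt A (x / b) : ℝ) ≤ ((x / b : ℕ) : ℝ) := by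
            exact_mod_cast cnt_le_self hA (x / b)
        _ ≤ (x : ℝ) / (b : ℝ) := Nat.cast_div_le
        _ = (x : ℝ) * (1 / (b:ℝ)) := by ring
    rw [← Finset.mul_sum] at h1
    refine h1.trans ?_
    refine mul_le_mul_of_nonneg_left ?_ (Nat.cast_nonneg x)
    refine le_trans (tail_bound A B F Q hsum ?_ ?_) hF.le
    · exact fun n hn => hBxB n (Finset.mem_filter.1 hn).1
    · intro n hn h hmem
      exact (Finset.mem_filter.1 hn).2 (Finset.mem_image.2 ⟨⟨n, h⟩, hmem, rfl⟩)
  -- bound on P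
  have hPbound : ∑ b ∈ P, (cnt A (x / b) : ℝ) ≤ (x : ℝ) * (1/4) + (K : ℝ) := by
    have h1 : ∑ b ∈ P, (cnt A (x / b) : ℝ)
        ≤ ∑ b ∈ P, ((ε * x) * (1 / (b:ℝ)) + (N:ℝ)) := by
      refine Finset.sum_le_sum fun b hb => ?_
      have hbpos : (1:ℝ) ≤ (b:ℝ) := hBxpos b (Finset.mem_filter.1 hb).1
      calc (cnt A (x / b) : ℝ) ≤ ε * ((x / b : ℕ) : ℝ) + N := hglob (x / b)
        _ ≤ ε * ((x:ℝ) / (b:ℝ)) + N := by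
            have := (Nat.cast_div_le : ((x / b : ℕ) : ℝ) ≤ (x:ℝ)/(b:ℝ))
            nlinarith
        _ = (ε * x) * (1 / (b:ℝ)) + N := by ring
    rw [Finset.sum_add_distrib, ← Finset.mul_sum, Finset.sum_const, nsmul_eq_mul] at h1
    have h2 : ∑ b ∈ P, (1:ℝ) / (b:ℝ) ≤ C := by
      rw [hC]
      have : ∑ b ∈ F, (1 : ℝ) / ((b : ℕ) : ℝ) = ∑ b ∈ F', (1:ℝ) / (b:ℝ) := by
        rw [hF']
        exact (Finset.sum_image (f := fun b : ℕ => (1:ℝ)/(b:ℝ)) (fun a _ b _ hab => Subtype.ext hab)).symm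
      rw [this]
      refine Finset.sum_le_sum_of_subset_of_nonneg ?_ (fun i _ _ => by positivity)
      exact fun b hb => (Finset.mem_filter.1 hb).2
    have h3 : (P.card : ℝ) ≤ (F.card : ℝ) := by
      have hcard : P.card ≤ F'.card := by
        refine Finset.card_le_card ?_
        exact fun b hb => (Finset.mem_filter.1 hb).2
      have hcard2 : F'.card ≤ F.card := Finset.card_image_le
      exact_mod_cast le_trans hcard hcard2
    have hεx : 0 ≤ ε * (x:ℝ) := by positivity
    have h4 : (ε * x) * (∑ b ∈ P, (1:ℝ) / (b:ℝ)) ≤ ε * x * C :=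
      mul_le_mul_of_nonneg_left h2 hεx
    have h5 : ε * (x:ℝ) * C ≤ (x:ℝ) * (1/4) := by
      have hx0 : (0:ℝ) ≤ x := Nat.cast_nonneg x
      nlinarith
    have h6 : (P.card : ℝ) * (N:ℝ) ≤ (K:ℝ) := by
      rw [hK]
      push_cast
      exact mul_le_mul_of_nonneg_right h3 (Nat.cast_nonneg N)
    linarith
  -- contradiction
  have hfin : (x : ℝ) ≤ (x:ℝ)/2 + K := by
    rw [hsplit] at hmain
    linarith
  have hxval : (x:ℝ) = 2*(K:ℝ) + 1 := by rw [hx]; push_cast; ring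
  rw [hxval] at hfin
  linarith

theorem stmt_14 (A B : Set ℕ) (hAB : MC2 A B)
    (hsum : Summable (fun b : B => (1 : ℝ) / ((b : ℕ) : ℝ))) :
    ¬ (fun x : ℕ => (cnt A x : ℝ)) =o[Filter.atTop] (fun x : ℕ => (x : ℝ)) ∧
      0 < Filter.limsup (fun x : ℕ => (cnt A x : ℝ) / (x : ℝ)) Filter.atTop := by
  have hnt := not_tendsto A B hAB hsum
  set u : ℕ → ℝ := fun x => (cnt A x : ℝ) / (x : ℝ) with hu
  have hlb : ∀ x, 0 ≤ u x := fun x => by positivity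
  have hub : ∀ x, u x ≤ 1 := by
    intro x
    rcases Nat.eq_zero_or_pos x with h | h
    · simp [hu, h]
    · rw [hu]
      have hx0 : (0:ℝ) < x := by exact_mod_cast h
      rw [div_le_one hx0]
      exact_mod_cast cnt_le_self hAB.1 x
  have hbdd_le : IsBoundedUnder (· ≤ ·) atTop u :=
    isBoundedUnder_of ⟨1, fun x => hub x⟩
  have hbdd_ge : IsBoundedUnder (· ≥ ·) atTop u :=
    isBoundedUnder_of ⟨0, fun x => hlb x⟩
  have hliminf : 0 ≤ liminf u atTop :=
    le_liminf_of_le hbdd_le.isCoboundedUnder_ge (Eventually.of_forall hlb)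
  have hpos : 0 < limsup u atTop := by
    by_contra hle
    push_neg at hle
    have hls : limsup u atTop = 0 :=
      le_antisymm hle (le_trans hliminf (liminf_le_limsup hbdd_le hbdd_ge))
    have hli : liminf u atTop = 0 :=
      le_antisymm (hls ▸ liminf_le_limsup hbdd_le hbdd_ge) hliminf
    exact hnt (tendsto_of_liminf_eq_limsup hli hls hbdd_le hbdd_ge)
  refine ⟨?_, hpos⟩
  intro ho
  exact hnt ho.tendsto_div_nhds_zero
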